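/- Let a : ℕ → Bool be a sequence with at least two toggle indices (i.e., there exist m₁ < m₂ with a m₁ ≠ a (m₁+1) and a m₂ ≠ a (m₂+1)). Define φ(b) for a sequence b with a least toggle index m(b) by: φ(b) holds iff (b 0 = true ↔ m(b) is even). Let a¹ and a² denote the once- and twice-shifted sequences of a. Then it is not the case that φ(a) ↔ φ(a¹) and φ(a¹) ↔ φ(a²). -/
import Mathlib


theorem stmt3 (a : ℕ → Bool) (m₁ m₂ : ℕ) (h12 : m₁ < m₂)
    (ht1 : a m₁ ≠ a (m₁ + 1)) (ht2 : a m₂ ≠ a (m₂ + 1))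
    (m m' m'' : ℕ)
    (hm : IsLeast {n | a n ≠ a (n + 1)} m)
    (hm' : IsLeast {n | a (n + 1) ≠ a (n + 1 + 1)} m')
    (hm'' : IsLeast {n | a (n + 2) ≠ a (n + 2 + 1)} m'') :
    ¬ ((((a 0 = true) ↔ Even m) ↔ ((a 1 = true) ↔ Even m')) ∧
       (((a 1 = true) ↔ Even m') ↔ ((a 2 = true) ↔ Even m''))) := by
  rintro ⟨h1, h2⟩
  rcases Nat.eq_zero_or_pos m with hm0 | hmpos
  · subst hm0
    have ha01 : a 0 ≠ a 1 := hm.1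
    rcases Nat.eq_zero_or_pos m' with hm'0 | hm'pos
    · subst hm'0
      have ha12 : a 1 ≠ a 2 := hm'.1
      simp only [Even.zero] at h1
      cases h0 : a 0 <;> cases hA : a 1 <;> simp_all
    · obtain ⟨k, rfl⟩ : ∃ k, m' = k + 1 := ⟨m' - 1, by omega⟩
      have ha12 : a 1 = a 2 := by
        by_contra hne
        have : k + 1 ≤ 0 := hm'.2 (show (0:ℕ) ∈ {n | a (n+1) ≠ a (n+1+1)} from hne)
        omega
      have e1 : m'' ≤ k := hm''.2 hm'.1
      have e2 : k + 1 ≤ m'' + 1 := hm'.2 hm''.1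
      have ekm : m'' = k := by omega
      subst ekm
      rw [Nat.even_add_one] at h2
      cases hA : a 1 <;> rcases Nat.even_or_odd m'' with he | ho <;>
        simp_all [Nat.even_iff, Nat.odd_iff] <;> omega
  · obtain ⟨k, rfl⟩ : ∃ k, m = k + 1 := ⟨m - 1, by omega⟩
    have ha01 : a 0 = a 1 := by
      by_contra hne
      have : k + 1 ≤ 0 := hm.2 (show (0:ℕ) ∈ {n | a n ≠ a (n+1)} from hne)
      omega
    have e1 : m' ≤ k := hm'.2 hm.1
    have e2 : k + 1 ≤ m' + 1 := hm.2 hm'.1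
    have ekm : m' = k := by omega
    subst ekm
    rw [Nat.even_add_one] at h1
    cases hA : a 0 <;> rcases Nat.even_or_odd m' with he | ho <;>
      simp_all [Nat.even_iff, Nat.odd_iff] <;> omega
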